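/- The function f(x) = log ‖x‖ on ℝ⁴ (four-dimensional Euclidean space with the standard norm) is biharmonic away from the origin: Δ(Δf)(x) = 0 for every x ≠ 0. -/

import Mathlib

open scoped BigOperators

/-- The Laplacian of `f : ℝⁿ → ℝ`, as the sum of the second partial derivatives
`∑ i, ∂²f/∂xᵢ²`. -/
noncomputable def laplacian {n : ℕ} (f : EuclideanSpace ℝ (Fin n) → ℝ)
    (x : EuclideanSpace ℝ (Fin n)) : ℝ :=
  ∑ i : Fin n,
    fderiv ℝ (fun y => fderiv ℝ f y (EuclideanSpace.single i 1)) x (EuclideanSpace.single i 1)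

namespace BihAux

local notation "E" => EuclideanSpace ℝ (Fin 4)

noncomputable def S (y : E) : ℝ := ∑ i, y i ^ 2

noncomputable def D (y : E) : E →L[ℝ] ℝ :=
  ∑ i, (2 * y i) • (EuclideanSpace.proj i : E →L[ℝ] ℝ)

lemma hasFDerivAt_proj (y : E) (i : Fin 4) :
    HasFDerivAt (fun z : E => z i) (EuclideanSpace.proj i : E →L[ℝ] ℝ) y :=
  (EuclideanSpace.proj i : E →L[ℝ] ℝ).hasFDerivAt

lemma hasFDerivAt_S (y : E) : HasFDerivAt S (D y) y := by
  have h : ∀ i ∈ Finset.univ, HasFDerivAt (fun z : E => z i ^ 2)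
      ((2 * y i) • (EuclideanSpace.proj i : E →L[ℝ] ℝ)) y := by
    intro i _
    have h2 := (hasFDerivAt_proj y i).mul (hasFDerivAt_proj y i)
    have hfun : (fun z : E => z i ^ 2) = fun z : E => z i * z i := by
      funext z; ring
    have hD : (2 * y i) • (EuclideanSpace.proj i : E →L[ℝ] ℝ)
        = y i • (EuclideanSpace.proj i : E →L[ℝ] ℝ)
          + y i • (EuclideanSpace.proj i : E →L[ℝ] ℝ) := by
      rw [← add_smul]; ring_nf
    rw [hfun, hD]
    exact h2
  exact HasFDerivAt.fun_sum h

lemma D_apply (y : E) (j : Fin 4) : D y (EuclideanSpace.single j 1) = 2 * y j := by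
  simp [D, ContinuousLinearMap.sum_apply, PiLp.proj_apply,
    EuclideanSpace.single_apply, Finset.sum_ite_eq]

lemma S_eq (y : E) : S y = ‖y‖ ^ 2 := by
  rw [EuclideanSpace.norm_eq, Real.sq_sqrt (by positivity)]
  simp [S, Real.norm_eq_abs, sq_abs]

lemma S_pos (y : E) (hy : y ≠ 0) : 0 < S y := by
  have h : (0 : ℝ) < ‖y‖ := norm_pos_iff.mpr hy
  rw [S_eq]; positivity

/-- Derivative of `z ↦ (S z)⁻¹`. -/
lemma hasFDerivAt_Sinv (y : E) (hy : y ≠ 0) :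
    HasFDerivAt (fun z : E => (S z)⁻¹)
      ((ContinuousLinearMap.smulRight (1 : ℝ →L[ℝ] ℝ) (-(S y ^ 2)⁻¹)).comp (D y)) y :=
  (hasFDerivAt_inv (ne_of_gt (S_pos y hy))).comp y (hasFDerivAt_S y)

lemma f_eq : (fun y : E => Real.log ‖y‖) = fun y : E => 2⁻¹ * Real.log (S y) := by
  funext y
  rw [S_eq, Real.log_pow]
  push_cast
  ring

lemma hasFDerivAt_f (y : E) (hy : y ≠ 0) :
    HasFDerivAt (fun z : E => Real.log ‖z‖) ((2⁻¹ * (S y)⁻¹) • D y) y := by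
  rw [f_eq]
  have h1 := ((hasFDerivAt_S y).log (ne_of_gt (S_pos y hy))).const_mul (2⁻¹ : ℝ)
  simpa [smul_smul] using h1

lemma fderiv_f (y : E) (hy : y ≠ 0) (i : Fin 4) :
    fderiv ℝ (fun z : E => Real.log ‖z‖) y (EuclideanSpace.single i 1) = y i * (S y)⁻¹ := by
  rw [(hasFDerivAt_f y hy).fderiv]
  simp [D_apply]
  ring

lemma mem_ne (x : E) (hx : x ≠ 0) : {y : E | y ≠ 0} ∈ nhds x :=
  isOpen_compl_singleton.mem_nhds (by simpa using hx)

lemma inner_eventually (x : E) (hx : x ≠ 0) (i : Fin 4) :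
    (fun y => fderiv ℝ (fun z : E => Real.log ‖z‖) y (EuclideanSpace.single i 1))
      =ᶠ[nhds x] fun y => y i * (S y)⁻¹ := by
  filter_upwards [mem_ne x hx] with y hy
  exact fderiv_f y hy i

lemma lap1 (x : E) (hx : x ≠ 0) :
    laplacian (fun y : E => Real.log ‖y‖) x = 2 * (S x)⁻¹ := by
  have hne := ne_of_gt (S_pos x hx)
  have key : ∀ i : Fin 4,
      fderiv ℝ (fun y => fderiv ℝ (fun z : E => Real.log ‖z‖) y (EuclideanSpace.single i 1)) x
        (EuclideanSpace.single i 1)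
        = (S x)⁻¹ - x i ^ 2 * (2 * (S x ^ 2)⁻¹) := by
    intro i
    have h := (hasFDerivAt_proj x i).fun_mul (hasFDerivAt_Sinv x hx)
    rw [(inner_eventually x hx i).fderiv_eq, h.fderiv]
    simp [D_apply, EuclideanSpace.single_apply, PiLp.proj_apply]
    ring
  rw [laplacian]
  simp only [key]
  rw [Finset.sum_sub_distrib, ← Finset.sum_mul, Finset.sum_const, Finset.card_univ]
  have hsum : (∑ i : Fin 4, x i ^ 2) = S x := rfl
  rw [hsum]
  simp only [Fintype.card_fin, nsmul_eq_mul, Nat.cast_ofNat]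
  field_simp
  ring

lemma lap_eventually (x : E) (hx : x ≠ 0) :
    laplacian (fun y : E => Real.log ‖y‖) =ᶠ[nhds x] fun y => 2 * (S y)⁻¹ := by
  filter_upwards [mem_ne x hx] with y hy
  exact lap1 y hy

lemma hasFDerivAt_SSinv (y : E) (hy : y ≠ 0) :
    HasFDerivAt (fun z : E => (S z * S z)⁻¹)
      ((ContinuousLinearMap.smulRight (1 : ℝ →L[ℝ] ℝ) (-((S y * S y) ^ 2)⁻¹)).comp
        (S y • D y + S y • D y)) y := by
  have hne : S y * S y ≠ 0 := mul_ne_zero (ne_of_gt (S_pos y hy)) (ne_of_gt (S_pos y hy))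
  exact (hasFDerivAt_inv hne).comp y ((hasFDerivAt_S y).mul (hasFDerivAt_S y))

lemma fderiv_u (y : E) (hy : y ≠ 0) (i : Fin 4) :
    fderiv ℝ (laplacian (fun z : E => Real.log ‖z‖)) y (EuclideanSpace.single i 1)
      = -4 * (y i * (S y * S y)⁻¹) := by
  have h := (hasFDerivAt_Sinv y hy).const_mul (2 : ℝ)
  rw [(lap_eventually y hy).fderiv_eq, h.fderiv]
  have hne := ne_of_gt (S_pos y hy)
  simp [D_apply]
  field_simp
  ring

lemma outer_eventually (x : E) (hx : x ≠ 0) (i : Fin 4) :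
    (fun y => fderiv ℝ (laplacian (fun z : E => Real.log ‖z‖)) y (EuclideanSpace.single i 1))
      =ᶠ[nhds x] fun y => -4 * (y i * (S y * S y)⁻¹) := by
  filter_upwards [mem_ne x hx] with y hy
  exact fderiv_u y hy i

lemma key2 (x : E) (hx : x ≠ 0) (i : Fin 4) :
    fderiv ℝ (fun y => fderiv ℝ (laplacian (fun z : E => Real.log ‖z‖)) y
        (EuclideanSpace.single i 1)) x (EuclideanSpace.single i 1)
      = x i ^ 2 * (16 * S x * ((S x * S x) ^ 2)⁻¹) - 4 * (S x * S x)⁻¹ := by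
  have h := ((hasFDerivAt_proj x i).fun_mul (hasFDerivAt_SSinv x hx)).const_mul (-4 : ℝ)
  rw [(outer_eventually x hx i).fderiv_eq, h.fderiv]
  simp [D_apply, EuclideanSpace.single_apply, PiLp.proj_apply]
  ring

end BihAux

/-- The function `log ‖x‖` on `ℝ⁴` is biharmonic away from the origin:
`Δ(Δ(log ‖x‖)) = 0` for `x ≠ 0`. -/
theorem biharmonic_log_norm_dim_four
    (x : EuclideanSpace ℝ (Fin 4)) (hx : x ≠ 0) :
    laplacian (laplacian (fun y => Real.log ‖y‖)) x = 0 := by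
  have hne := ne_of_gt (BihAux.S_pos x hx)
  rw [laplacian]
  simp only [BihAux.key2 x hx]
  rw [Finset.sum_sub_distrib, ← Finset.sum_mul, Finset.sum_const, Finset.card_univ]
  have hsum : (∑ i : Fin 4, x i ^ 2) = BihAux.S x := rfl
  rw [hsum]
  simp only [Fintype.card_fin, nsmul_eq_mul, Nat.cast_ofNat]
  field_simp
  ring
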